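/- For 0 < α < 1 and 0 < y < π, Im ψ(iy) < 0, where ψ(iy) = (1 - e^{iy})(A(y) + iB(y)) with A(y) = cos(απ/2) Σ_{k=0}^∞ ((2kπ+2π-y)^{-2-α} + (2kπ+y)^{-2-α}) and B(y) = sin(απ/2) Σ_{k=0}^∞ ((2kπ+2π-y)^{-2-α} - (2kπ+y)^{-2-α}). -/
import Mathlib


open Complex Real

lemma sumP (α c : ℝ) (hα : 0 < α) (hc : 0 < c) :
    Summable (fun k : ℕ => (2 * k * π + c) ^ (-(2 + α))) := by
  rw [← summable_nat_add_iff 1]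
  have hg : Summable (fun n : ℕ => ((n + 1 : ℕ) : ℝ) ^ (-(2 + α))) := by
    exact (summable_nat_add_iff 1).mpr (Real.summable_nat_rpow.mpr (by linarith))
  refine hg.of_nonneg_of_le (fun n => Real.rpow_nonneg ?_ _) (fun n => ?_)
  · positivity
  · have h1 : ((n + 1 : ℕ) : ℝ) ≤ 2 * (n + 1 : ℕ) * π + c := by
      have := Real.pi_gt_three
      have : (0:ℝ) ≤ (n+1:ℕ) := by positivity
      push_cast
      nlinarith [Real.pi_gt_three]
    have h2 : (0:ℝ) < ((n + 1 : ℕ) : ℝ) := by positivity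
    exact Real.rpow_le_rpow_of_nonpos h2 h1 (by linarith)

lemma cpow_I_pos (t w : ℝ) (ht : 0 < t) :
    (Complex.I * t) ^ ((w : ℝ) : ℂ) =
      ((t ^ w : ℝ) : ℂ) * Complex.exp (Complex.I * (w * (π / 2))) := by
  have h1 : (Complex.I * t : ℂ) = Complex.exp ((Real.log t : ℂ) + Complex.I * (π / 2)) := by
    rw [Complex.exp_add]
    rw [← Complex.ofReal_exp, Real.exp_log ht]
    have : Complex.exp (Complex.I * (π / 2)) = Complex.I := by
      rw [mul_comm, Complex.exp_mul_I]
      simp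
    rw [this]; ring
  have hne : (Complex.I * t : ℂ) ≠ 0 := by
    simp [Complex.ext_iff, ht.ne']
  rw [Complex.cpow_def_of_ne_zero hne, h1, Complex.log_exp (by simp; linarith [Real.pi_pos])
    (by simp; linarith [Real.pi_pos])]
  rw [add_mul, Complex.exp_add, Real.rpow_def_of_pos ht, Complex.ofReal_exp, Complex.ofReal_mul]
  ring_nf

lemma cpow_I_neg (t w : ℝ) (ht : t < 0) :
    (Complex.I * t) ^ ((w : ℝ) : ℂ) =
      (((-t) ^ w : ℝ) : ℂ) * Complex.exp (-(Complex.I * (w * (π / 2)))) := by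
  have hmt : 0 < -t := by linarith
  have h1 : (Complex.I * t : ℂ) = Complex.exp ((Real.log (-t) : ℂ) + Complex.I * (-(π / 2))) := by
    rw [Complex.exp_add]
    rw [← Complex.ofReal_exp, Real.exp_log hmt]
    have : Complex.exp (Complex.I * (-(π / 2))) = -Complex.I := by
      rw [mul_comm, Complex.exp_mul_I]
      simp
    rw [this]
    push_cast
    ring
  have hne : (Complex.I * t : ℂ) ≠ 0 := by
    simp [Complex.ext_iff, ht.ne]
  rw [Complex.cpow_def_of_ne_zero hne, h1, Complex.log_exp (by simp; linarith [Real.pi_pos])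
    (by simp; linarith [Real.pi_pos])]
  rw [add_mul, Complex.exp_add, Real.rpow_def_of_pos hmt, Complex.ofReal_exp, Complex.ofReal_mul]
  ring_nf

noncomputable def psi (α : ℝ) (z : ℂ) : ℂ :=
  (Complex.exp z - 1) *
    ∑' k : ℤ, (z + 2 * (k : ℂ) * (π : ℂ) * Complex.I) ^ (((-(2 + α) : ℝ)) : ℂ)

/-- `A(y) = cos(απ/2) Σ_{k≥0} ((2kπ+2π-y)^{-2-α} + (2kπ+y)^{-2-α})`. -/
noncomputable def Aser (α y : ℝ) : ℝ :=
  Real.cos (α * π / 2) *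
    ∑' k : ℕ, ((2 * k * π + 2 * π - y) ^ (-(2 + α)) + (2 * k * π + y) ^ (-(2 + α)))

/-- `B(y) = sin(απ/2) Σ_{k≥0} ((2kπ+2π-y)^{-2-α} - (2kπ+y)^{-2-α})`. -/
noncomputable def Bser (α y : ℝ) : ℝ :=
  Real.sin (α * π / 2) *
    ∑' k : ℕ, ((2 * k * π + 2 * π - y) ^ (-(2 + α)) - (2 * k * π + y) ^ (-(2 + α)))

/-- For `0 < α < 1` and `0 < y < π`, `ψ(iy) = (1 - e^{iy})(A(y) + iB(y))` and
`Im ψ(iy) = B(y)(1-cos y) - A(y) sin y < 0`. -/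
theorem stmt5 (α : ℝ) (hα0 : 0 < α) (hα1 : α < 1) (y : ℝ) (hy0 : 0 < y) (hyπ : y < π) :
    psi α (Complex.I * y) =
        (1 - Complex.exp (Complex.I * y)) * ((Aser α y : ℂ) + Complex.I * (Bser α y : ℂ)) ∧
      (psi α (Complex.I * y)).im = Bser α y * (1 - Real.cos y) - Aser α y * Real.sin y ∧
      (psi α (Complex.I * y)).im < 0 := by
  have hπ := Real.pi_pos
  set θ := α * π / 2 with hθ
  set P : ℕ → ℝ := fun k => (2 * k * π + 2 * π - y) ^ (-(2 + α)) with hPdef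
  set Q : ℕ → ℝ := fun k => (2 * k * π + y) ^ (-(2 + α)) with hQdef
  have hPbase : ∀ k : ℕ, (0:ℝ) < 2 * k * π + 2 * π - y := by
    intro k; have : (0:ℝ) ≤ 2 * k * π := by positivity
    nlinarith
  have hQbase : ∀ k : ℕ, (0:ℝ) < 2 * k * π + y := by
    intro k; have : (0:ℝ) ≤ 2 * k * π := by positivity
    linarith
  have hP : Summable P := by
    refine (sumP α (2 * π - y) hα0 (by linarith)).congr fun n => ?_
    simp only [hPdef]
    rw [show 2 * (n:ℝ) * π + (2 * π - y) = 2 * n * π + 2 * π - y by ring]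
  have hQ : Summable Q := sumP α y hα0 hy0
  set f : ℤ → ℂ := fun k =>
    (Complex.I * y + 2 * (k : ℂ) * (π : ℂ) * Complex.I) ^ (((-(2 + α) : ℝ)) : ℂ) with hfdef
  set Em : ℂ := Complex.exp (Complex.I * ((-(2 + α) : ℝ) * ((π:ℝ) / 2 : ℂ))) with hEm
  set Ep : ℂ := Complex.exp (-(Complex.I * ((-(2 + α) : ℝ) * ((π:ℝ) / 2 : ℂ)))) with hEp
  have hfpos : ∀ n : ℕ, f n = (Q n : ℂ) * Em := by
    intro n
    have hb : Complex.I * y + 2 * ((n:ℤ) : ℂ) * (π : ℂ) * Complex.I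
        = Complex.I * ((2 * n * π + y : ℝ) : ℂ) := by push_cast; ring
    simp only [hfdef, hb]
    rw [cpow_I_pos _ _ (hQbase n)]
  have hfneg : ∀ n : ℕ, f (-(n + 1)) = (P n : ℂ) * Ep := by
    intro n
    have hb : Complex.I * y + 2 * ((-(n+1) : ℤ) : ℂ) * (π : ℂ) * Complex.I
        = Complex.I * ((-(2 * n * π + 2 * π - y) : ℝ) : ℂ) := by push_cast; ring
    simp only [hfdef, hb]
    rw [cpow_I_neg _ _ (by simpa using neg_neg_iff_pos.mpr (hPbase n) : (-(2*n*π+2*π-y) : ℝ) < 0),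
      neg_neg]
  have hsum1 : Summable (fun n : ℕ => f n) :=
    ((Complex.summable_ofReal.mpr hQ).mul_right Em).congr fun n => (hfpos n).symm
  have hsum2 : Summable (fun n : ℕ => f (-(n + 1))) :=
    ((Complex.summable_ofReal.mpr hP).mul_right Ep).congr fun n => (hfneg n).symm
  have htsum : (∑' k : ℤ, f k) = ((∑' n, Q n : ℝ) : ℂ) * Em + ((∑' n, P n : ℝ) : ℂ) * Ep := by
    rw [tsum_of_nat_of_neg_add_one hsum1 hsum2, tsum_congr hfpos, tsum_congr hfneg,
      tsum_mul_right, tsum_mul_right, Complex.ofReal_tsum, Complex.ofReal_tsum]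
  have hexpE : ∀ x : ℝ, Complex.exp (Complex.I * (x : ℂ)) =
      (Real.cos x : ℂ) + (Real.sin x : ℂ) * Complex.I := by
    intro x
    rw [mul_comm, Complex.exp_mul_I, ← Complex.ofReal_cos, ← Complex.ofReal_sin]
  have hEmval : Em = -((Real.cos θ : ℂ) - (Real.sin θ : ℂ) * Complex.I) := by
    rw [hEm, show Complex.I * ((-(2 + α) : ℝ) * ((π:ℝ) / 2 : ℂ))
        = Complex.I * ((-(π + θ) : ℝ) : ℂ) by rw [hθ]; push_cast; ring, hexpE]
    rw [Real.cos_neg, Real.sin_neg, Real.cos_add, Real.sin_add, Real.cos_pi, Real.sin_pi]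
    push_cast; ring
  have hEpval : Ep = -((Real.cos θ : ℂ) + (Real.sin θ : ℂ) * Complex.I) := by
    rw [hEp, show -(Complex.I * ((-(2 + α) : ℝ) * ((π:ℝ) / 2 : ℂ)))
        = Complex.I * (((π + θ) : ℝ) : ℂ) by rw [hθ]; push_cast; ring, hexpE]
    rw [Real.cos_add, Real.sin_add, Real.cos_pi, Real.sin_pi]
    push_cast; ring
  have hA : Aser α y = Real.cos θ * ((∑' n, P n) + (∑' n, Q n)) := by
    rw [Aser, ← hθ, Summable.tsum_add hP hQ]
  have hB : Bser α y = Real.sin θ * ((∑' n, P n) - (∑' n, Q n)) := by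
    rw [Bser, ← hθ, Summable.tsum_sub hP hQ]
  have h1 : psi α (Complex.I * y) =
      (1 - Complex.exp (Complex.I * y)) * ((Aser α y : ℂ) + Complex.I * (Bser α y : ℂ)) := by
    rw [psi, ← hfdef, htsum, hEmval, hEpval, hA, hB]
    push_cast
    ring
  refine ⟨h1, ?_, ?_⟩
  · rw [h1, show Complex.I * (y:ℂ) = (y:ℂ) * Complex.I by ring, Complex.exp_mul_I,
      ← Complex.ofReal_cos, ← Complex.ofReal_sin]
    simp [Complex.add_im, Complex.mul_im, Complex.sub_im, Complex.sub_re,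
      Complex.cos_ofReal_re, Complex.sin_ofReal_re]
    ring
  · have him : (psi α (Complex.I * y)).im = Bser α y * (1 - Real.cos y) - Aser α y * Real.sin y := by
      rw [h1, show Complex.I * (y:ℂ) = (y:ℂ) * Complex.I by ring, Complex.exp_mul_I,
        ← Complex.ofReal_cos, ← Complex.ofReal_sin]
      simp [Complex.add_im, Complex.mul_im, Complex.sub_im, Complex.sub_re,
      Complex.cos_ofReal_re, Complex.sin_ofReal_re]
      ring
    rw [him]
    have hθ0 : 0 < θ := by rw [hθ]; positivity
    have hθπ : θ < π / 2 := by rw [hθ]; nlinarith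
    have hcθ : 0 < Real.cos θ := Real.cos_pos_of_mem_Ioo ⟨by linarith, hθπ⟩
    have hsθ : 0 < Real.sin θ := Real.sin_pos_of_pos_of_lt_pi hθ0 (by linarith)
    have hPQ : (∑' n, P n) < (∑' n, Q n) := by
      refine Summable.tsum_lt_tsum (i := 0) (fun n => ?_) ?_ hP hQ
      · exact Real.rpow_le_rpow_of_nonpos (hQbase n) (by linarith) (by linarith)
      · exact Real.rpow_lt_rpow_of_neg (hQbase 0) (by push_cast; linarith) (by linarith)
    have hApos : 0 < Aser α y := by
      rw [hA]
      have h1 : 0 < (∑' n, P n) := Summable.tsum_pos hP (fun n => Real.rpow_nonneg (hPbase n).le _) 0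
        (Real.rpow_pos_of_pos (hPbase 0) _)
      have h2 : 0 ≤ (∑' n, Q n) := tsum_nonneg fun n => Real.rpow_nonneg (hQbase n).le _
      positivity
    have hBneg : Bser α y < 0 := by
      rw [hB]
      exact mul_neg_of_pos_of_neg hsθ (by linarith)
    have hsy : 0 < Real.sin y := Real.sin_pos_of_pos_of_lt_pi hy0 hyπ
    have hcy : Real.cos y ≤ 1 := Real.cos_le_one y
    nlinarith
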